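/- Suppose μ is a finite positive Borel measure on the unit disc satisfying μ(Q(e^{iθ}, r)) ≤ g(r) for all θ and all r ∈ (0,2), where g is nondecreasing on [0,2) with ∫_0^1 g(x)/x² dx < ∞. Then μ has bounded Poisson balayage: sup_{θ} ∫_D P_z(e^{iθ}) dμ(z) < ∞. -/

import Mathlib

open MeasureTheory Set
open scoped Real ENNReal

noncomputable section

def unitDisc : Set ℂ := Metric.ball 0 1
def unitCircle : Set ℂ := Metric.sphere 0 1

/-- The Poisson kernel of the unit disc. -/
def poissonK (z ζ : ℂ) : ℝ := (1 - ‖z‖ ^ 2) / ‖ζ - z‖ ^ 2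

/-- The Laplacian of a function `h : ℂ → ℝ`, viewing `ℂ` as `ℝ²`. -/
def lap (h : ℂ → ℝ) (z : ℂ) : ℝ :=
  iteratedFDeriv ℝ 2 h z ![1, 1] + iteratedFDeriv ℝ 2 h z ![Complex.I, Complex.I]

/-- `h` is harmonic on the open unit disc. -/
def HarmonicOnDisc (h : ℂ → ℝ) : Prop :=
  ContDiffOn ℝ 2 h unitDisc ∧ ∀ z ∈ unitDisc, lap h z = 0

/-- Angular distance between `Arg z` and `θ` (computed modulo `2π`). -/
def angDist (z : ℂ) (θ : ℝ) : ℝ := |Complex.arg (z * Complex.exp (-θ * Complex.I))|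

/-- The Carleson window `Q(e^{iθ}, r)`. -/
def carlesonWindow (θ r : ℝ) : Set ℂ :=
  {z ∈ unitDisc | 1 - ‖z‖ ≤ r ∧ angDist z θ ≤ r}


lemma one_sub_cos_bound {d : ℝ} (h0 : 0 ≤ d) (hπ : d ≤ π) :
    2 / π ^ 2 * d ^ 2 ≤ 1 - Real.cos d := by
  have hπpos := Real.pi_pos
  have h1 : Real.cos d = Real.cos (d/2) ^ 2 - Real.sin (d/2) ^ 2 := by
    have := Real.cos_two_mul' (x := d/2)
    rwa [mul_div_cancel₀ _ (two_ne_zero)] at this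
  have h2 : Real.sin (d/2) ^ 2 + Real.cos (d/2) ^ 2 = 1 := Real.sin_sq_add_cos_sq _
  have h3 : 2 / π * (d/2) ≤ Real.sin (d/2) := Real.mul_le_sin (by linarith) (by linarith)
  have h4 : 0 ≤ 2 / π * (d/2) := by positivity
  have h5 : (2 / π * (d/2)) ^ 2 ≤ Real.sin (d/2) ^ 2 := by
    exact pow_le_pow_left₀ h4 h3 2
  have heq : (2 / π * (d/2)) ^ 2 = d ^ 2 / π ^ 2 := by field_simp
  rw [heq] at h5
  have heq2 : 2 / π ^ 2 * d ^ 2 = 2 * (d ^ 2 / π ^ 2) := by ring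
  linarith

lemma pi_sq_lt_ten : π ^ 2 < 10 := by
  nlinarith [Real.pi_lt_d2, Real.pi_pos]

lemma dt_le_five {d t : ℝ} (hd0 : 0 ≤ d) (ht : 0 < t) (h8 : (d * t) ^ 2 < 2 * π ^ 2) :
    d * t ≤ 5 := by
  have h25 : (d * t) ^ 2 < 25 := by nlinarith [pi_sq_lt_ten]
  nlinarith [mul_nonneg hd0 ht.le]

lemma mem_window {θ t : ℝ} (ht : 5 ≤ t) {z : ℂ} (hz : z ∈ unitDisc)
    (hP : t < poissonK z (Complex.exp (θ * Complex.I))) :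
    z ∈ carlesonWindow θ (5 / t) := by
  have htpos : (0:ℝ) < t := by linarith
  set ζ := Complex.exp (θ * Complex.I) with hζ
  set w := z * Complex.exp (-θ * Complex.I) with hw
  have hζw : ζ - z = ζ * (1 - w) := by
    rw [hw, hζ, mul_sub, mul_one, mul_comm z _, ← mul_assoc, ← Complex.exp_add]
    ring_nf
    rw [Complex.exp_zero, mul_one]
  have hζnorm : ‖ζ‖ = 1 := by
    rw [hζ, Complex.norm_exp_ofReal_mul_I]
  have hwnorm : ‖w‖ = ‖z‖ := by
    rw [hw, norm_mul]
    have h1 : ‖Complex.exp (-θ * Complex.I)‖ = 1 := by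
      have := Complex.norm_exp_ofReal_mul_I (-θ)
      convert this using 2
      push_cast
      ring
    rw [h1, mul_one]
  have hz1 : ‖z‖ < 1 := by simpa [unitDisc, mem_ball_zero_iff] using hz
  have hz0 : (0:ℝ) ≤ ‖z‖ := norm_nonneg z
  have hnum : 0 < 1 - ‖z‖ ^ 2 := by nlinarith
  have hdpos : 0 < ‖ζ - z‖ := by
    rcases (norm_nonneg (ζ - z)).lt_or_eq with h | h
    · exact h
    · exfalso
      rw [poissonK, ← h] at hP
      simp at hP
      linarith
  have key : t * ‖ζ - z‖ ^ 2 < 1 - ‖z‖ ^ 2 := by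
    rw [poissonK, lt_div_iff₀ (pow_pos hdpos 2)] at hP
    linarith
  have h1w : ‖ζ - z‖ = ‖1 - w‖ := by rw [hζw, norm_mul, hζnorm, one_mul]
  rw [h1w] at key hdpos
  have hlow : 1 - ‖z‖ ≤ ‖1 - w‖ := by
    have h := norm_sub_norm_le (1:ℂ) w
    rwa [norm_one, hwnorm] at h
  have ha : (0:ℝ) < 1 - ‖z‖ := by linarith
  have h4 : 1 - ‖z‖ ^ 2 ≤ 2 * (1 - ‖z‖) := by nlinarith
  have hbw : t * ‖1 - w‖ < 2 := by nlinarith [hdpos]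
  refine ⟨hz, ?_, ?_⟩
  · rw [le_div_iff₀ htpos]
    nlinarith [mul_le_mul_of_nonneg_left (pow_le_pow_left₀ ha.le hlow 2) htpos.le]
  · -- angular part
    have hρ : (1:ℝ)/2 ≤ ‖w‖ := by
      by_contra hcon
      push_neg at hcon
      rw [hwnorm] at hcon
      have : (1:ℝ)/2 < ‖1 - w‖ := by linarith
      nlinarith
    have hwne : w ≠ 0 := by
      intro h0
      rw [h0, norm_zero] at hρ
      linarith
    set d := |Complex.arg w| with hd
    have hang : angDist z θ = d := rfl
    rw [hang, le_div_iff₀ htpos]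
    have hd0 : 0 ≤ d := abs_nonneg _
    have hdπ : d ≤ π := Complex.abs_arg_le_pi w
    have hre : w.re = ‖w‖ * Real.cos d := by
      have hc := Complex.cos_arg hwne
      rw [hd, Real.cos_abs, hc]
      have : ‖w‖ ≠ 0 := by
        simpa using hwne
      field_simp
    have hnsq : ‖1 - w‖ ^ 2 = (1 - ‖w‖) ^ 2 + 2 * ‖w‖ * (1 - Real.cos d) := by
      have e1 : ‖1 - w‖ ^ 2 = (1 - w.re) ^ 2 + (-w.im) ^ 2 := by
        rw [Complex.sq_norm, Complex.normSq_apply]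
        simp [Complex.sub_re, Complex.sub_im]
        ring
      have e2 : ‖w‖ ^ 2 = w.re ^ 2 + w.im ^ 2 := by
        rw [Complex.sq_norm, Complex.normSq_apply]
        ring
      rw [e1]
      linear_combination -e2 - 2*hre
    have hcosle : Real.cos d ≤ 1 := Real.cos_le_one d
    have hcos := one_sub_cos_bound hd0 hdπ
    have h7 : 1 - Real.cos d ≤ ‖1 - w‖ ^ 2 := by nlinarith
    have h6 : t ^ 2 * ‖1 - w‖ ^ 2 < 4 := by nlinarith [hdpos]
    have hπpos := Real.pi_pos
    have h8 : (d * t) ^ 2 < 2 * π ^ 2 := by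
      have h9 : 2 / π ^ 2 * d ^ 2 ≤ ‖1 - w‖ ^ 2 := le_trans hcos h7
      have h10 : 2 / π ^ 2 * (d * t) ^ 2 < 4 := by
        have h11 := mul_le_mul_of_nonneg_left h9 (sq_nonneg t)
        calc 2 / π ^ 2 * (d * t) ^ 2 = t ^ 2 * (2 / π ^ 2 * d ^ 2) := by ring
          _ ≤ t ^ 2 * ‖1 - w‖ ^ 2 := h11
          _ < 4 := h6
      have hπ2 : (0:ℝ) < π ^ 2 := by positivity
      rw [div_mul_eq_mul_div, div_lt_iff₀ hπ2] at h10
      linarith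
    exact dt_le_five hd0 htpos h8

/-- A Carleson-window growth condition `μ(Q(e^{iθ},r)) ≤ g(r)` with `∫₀ g(x)/x² dx < ∞` implies
that `μ` has bounded Poisson balayage. -/
theorem bounded_balayage_of_carleson_condition (μ : Measure ℂ) [IsFiniteMeasure μ]
    (hsupp : μ unitDiscᶜ = 0) (g : ℝ → ℝ) (hg : MonotoneOn g (Ico 0 2))
    (hint : IntegrableOn (fun x => g x / x ^ 2) (Ioo 0 1) volume)
    (hμg : ∀ θ : ℝ, ∀ r ∈ Ioo (0 : ℝ) 2, μ (carlesonWindow θ r) ≤ ENNReal.ofReal (g r)) :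
    ∃ C : ℝ, ∀ θ : ℝ,
      ∫⁻ z, ENNReal.ofReal (poissonK z (Complex.exp (θ * Complex.I))) ∂μ ≤
        ENNReal.ofReal C := by
  classical
  set I2 : ℝ := ∫ x in Ioo (0:ℝ) 1, 5 * max (g x / x ^ 2) 0 with hI2
  have hI2nn : 0 ≤ I2 := by
    apply integral_nonneg
    intro x
    have := le_max_right (g x / x ^ 2) 0
    positivity
  refine ⟨(μ Set.univ * ENNReal.ofReal 5).toReal + I2, fun θ => ?_⟩
  set ζ := Complex.exp ((θ:ℂ) * Complex.I) with hζ
  have f_mble : Measurable fun z : ℂ => poissonK z ζ := by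
    unfold poissonK
    apply Measurable.div
    · exact (measurable_const.sub ((measurable_norm).pow_const 2))
    · exact (((measurable_const.sub measurable_id).norm).pow_const 2)
  have f_nn : 0 ≤ᵐ[μ] fun z : ℂ => poissonK z ζ := by
    rw [Filter.EventuallyLE, ae_iff]
    apply measure_mono_null _ hsupp
    intro z hzz
    simp only [mem_setOf_eq, not_le, Pi.zero_apply] at hzz
    intro hzd
    have hz1 : ‖z‖ < 1 := by simpa [unitDisc, mem_ball_zero_iff] using hzd
    have : 0 ≤ poissonK z ζ := by
      apply div_nonneg _ (by positivity)
      nlinarith [norm_nonneg z]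
    exact absurd hzz (not_lt.2 this)
  rw [lintegral_eq_lintegral_meas_lt μ f_nn f_mble.aemeasurable]
  have hsplit : Ioi (0:ℝ) = Ioc 0 5 ∪ Ioi 5 := (Ioc_union_Ioi_eq_Ioi (by norm_num)).symm
  rw [hsplit, lintegral_union measurableSet_Ioi (Ioc_disjoint_Ioi le_rfl)]
  -- part 1
  have hpart1 : ∫⁻ t in Ioc (0:ℝ) 5, μ {a | t < poissonK a ζ} ≤ μ Set.univ * ENNReal.ofReal 5 := by
    calc ∫⁻ t in Ioc (0:ℝ) 5, μ {a | t < poissonK a ζ}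
        ≤ ∫⁻ _ in Ioc (0:ℝ) 5, μ Set.univ :=
          setLIntegral_mono' measurableSet_Ioc fun t _ => measure_mono (subset_univ _)
      _ = μ Set.univ * volume (Ioc (0:ℝ) 5) := setLIntegral_const _ _
      _ = μ Set.univ * ENNReal.ofReal 5 := by rw [Real.volume_Ioc]; norm_num
  -- substitution setup
  have himg : (fun x : ℝ => 5 / x) '' Ioo 0 1 = Ioi 5 := by
    ext y
    constructor
    · rintro ⟨x, ⟨hx0, hx1⟩, rfl⟩
      simp only [mem_Ioi]
      rw [lt_div_iff₀ hx0]
      nlinarith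
    · intro hy
      simp only [mem_Ioi] at hy
      refine ⟨5 / y, ⟨by positivity, ?_⟩, by field_simp⟩
      rw [div_lt_one (by linarith)]
      linarith
  have hderiv : ∀ x ∈ Ioo (0:ℝ) 1, HasDerivWithinAt (fun x : ℝ => 5 / x) (-5 / x ^ 2) (Ioo 0 1) x := by
    intro x hx
    have hx0 : x ≠ 0 := ne_of_gt hx.1
    have h := ((hasDerivAt_inv hx0).const_mul (5:ℝ)).hasDerivWithinAt (s := Ioo (0:ℝ) 1)
    have heq : (fun x : ℝ => 5 / x) = fun y : ℝ => 5 * y⁻¹ := by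
      funext y; rw [div_eq_mul_inv]
    rw [heq]
    exact h.congr_deriv (by ring)
  have hinj : InjOn (fun x : ℝ => 5 / x) (Ioo 0 1) := by
    intro a ha b hb h
    simp only at h
    have ha0 : a ≠ 0 := ne_of_gt ha.1
    have hb0 : b ≠ 0 := ne_of_gt hb.1
    field_simp at h
    linarith
  set G : ℝ → ℝ := fun y => max (g (5 / y)) 0 with hG
  have hGeq : EqOn (fun x => |(-5 / x ^ 2)| • G (5 / x)) (fun x => 5 * max (g x / x ^ 2) 0)
      (Ioo (0:ℝ) 1) := by
    intro x hx
    obtain ⟨hx0, hx1⟩ := hx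
    have hx2 : (0:ℝ) < x ^ 2 := by positivity
    have h55 : 5 / (5 / x) = x := by field_simp
    simp only [smul_eq_mul, hG, h55]
    rw [abs_div, abs_neg, abs_of_pos hx2]
    have h5 : |(5:ℝ)| = 5 := by norm_num
    rw [h5]
    rcases le_total (g x) 0 with h | h
    · rw [max_eq_right h, max_eq_right (div_nonpos_of_nonpos_of_nonneg h hx2.le)]
      ring
    · rw [max_eq_left h, max_eq_left (div_nonneg h hx2.le)]
      ring
  have hint5 : IntegrableOn (fun x => 5 * max (g x / x ^ 2) 0) (Ioo (0:ℝ) 1) volume :=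
    (hint.pos_part).const_mul 5
  have hGint : IntegrableOn G (Ioi (5:ℝ)) volume := by
    rw [← himg, integrableOn_image_iff_integrableOn_abs_deriv_smul measurableSet_Ioo hderiv hinj G]
    exact hint5.congr_fun hGeq.symm measurableSet_Ioo
  have hval : ∫ y in Ioi (5:ℝ), G y = I2 := by
    rw [← himg, integral_image_eq_integral_abs_deriv_smul measurableSet_Ioo hderiv hinj G, hI2]
    exact setIntegral_congr_fun measurableSet_Ioo hGeq
  have hG_nn : 0 ≤ᵐ[volume.restrict (Ioi (5:ℝ))] G := ae_of_all _ fun y => le_max_right _ _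
  have hpart2 : ∫⁻ t in Ioi (5:ℝ), μ {a | t < poissonK a ζ} ≤ ENNReal.ofReal I2 := by
    calc ∫⁻ t in Ioi (5:ℝ), μ {a | t < poissonK a ζ}
        ≤ ∫⁻ t in Ioi (5:ℝ), ENNReal.ofReal (G t) := by
          apply setLIntegral_mono' measurableSet_Ioi
          intro t htt
          simp only [mem_Ioi] at htt
          have ht5 : (5:ℝ) ≤ t := htt.le
          have htpos : (0:ℝ) < t := by linarith
          have hsub : {a : ℂ | t < poissonK a ζ} ⊆ carlesonWindow θ (5 / t) ∪ unitDiscᶜ := by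
            intro a haa
            by_cases hda : a ∈ unitDisc
            · exact Or.inl (mem_window ht5 hda haa)
            · exact Or.inr hda
          calc μ {a : ℂ | t < poissonK a ζ}
              ≤ μ (carlesonWindow θ (5 / t) ∪ unitDiscᶜ) := measure_mono hsub
            _ ≤ μ (carlesonWindow θ (5 / t)) + μ unitDiscᶜ := measure_union_le _ _
            _ = μ (carlesonWindow θ (5 / t)) := by rw [hsupp, add_zero]
            _ ≤ ENNReal.ofReal (g (5 / t)) := by
                apply hμg θ
                constructor
                · positivity
                · rw [div_lt_iff₀ htpos]; linarith
            _ ≤ ENNReal.ofReal (G t) := ENNReal.ofReal_le_ofReal (le_max_left _ _)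
      _ = ENNReal.ofReal (∫ y in Ioi (5:ℝ), G y) :=
          (ofReal_integral_eq_lintegral_ofReal hGint hG_nn).symm
      _ = ENNReal.ofReal I2 := by rw [hval]
  calc (∫⁻ t in Ioc (0:ℝ) 5, μ {a | t < poissonK a ζ}) + ∫⁻ t in Ioi (5:ℝ), μ {a | t < poissonK a ζ}
      ≤ μ Set.univ * ENNReal.ofReal 5 + ENNReal.ofReal I2 := add_le_add hpart1 hpart2
    _ = ENNReal.ofReal ((μ Set.univ * ENNReal.ofReal 5).toReal) + ENNReal.ofReal I2 := by
        rw [ENNReal.ofReal_toReal (by finiteness)]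
    _ = ENNReal.ofReal ((μ Set.univ * ENNReal.ofReal 5).toReal + I2) :=
        (ENNReal.ofReal_add ENNReal.toReal_nonneg hI2nn).symm
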